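/- Fix an integer n ≥ 1, a field 𝔽 and elements t, s ∈ 𝔽 with t ≠ s. Let R(t,s) be the trigonometric R-matrix and, for n×n matrices A, B over 𝔽, let C := (A⊗B)·R(t,s) − R(t,s)·(A⊗B). Then for all indices 1 ≤ p < p̄ ≤ n and 1 ≤ q ≤ n, the ((p,p̄),(q,q)) entry of C equals (2t·B_{p q}·A_{p̄ q} − (t+s)·A_{p q}·B_{p̄ q})/(t − s). (With A = A(t) and B = A(s), this is the Sklyanin bracket formula {a_{pq}(t), a_{p̄ q}(s)} = (2t a_{pq}(s) a_{p̄ q}(t) − (t+s) a_{pq}(t) a_{p̄ q}(s))/(t−s).) -/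

import Mathlib

open Matrix Kronecker

/-- The `n×n` matrix unit `E_{ij}`. -/
def matrixUnit {𝔽 : Type*} [Field 𝔽] (n : ℕ) (i j : Fin n) : Matrix (Fin n) (Fin n) 𝔽 :=
  Matrix.single i j 1

/-- The trigonometric R-matrix
`R(t,s) = ((t+s)/(s−t))·Σ_k E_{kk}⊗E_{kk}
        + (2/(s−t))·Σ_{l<m} (t·E_{lm}⊗E_{ml} + s·E_{ml}⊗E_{lm})`,
acting on the tensor square indexed by pairs `(i,j) ∈ {1,…,n}²` with the
Kronecker convention `(X⊗Y)_{(i,j),(k,l)} = X_{ik}·Y_{jl}`. -/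
def trigR {𝔽 : Type*} [Field 𝔽] (n : ℕ) (t s : 𝔽) :
    Matrix (Fin n × Fin n) (Fin n × Fin n) 𝔽 :=
  ((t + s) / (s - t)) •
      ∑ k : Fin n, (matrixUnit n k k) ⊗ₖ (matrixUnit n k k)
    + (2 / (s - t)) •
      ∑ l : Fin n, ∑ m : Fin n,
        if l < m then
          t • ((matrixUnit n l m) ⊗ₖ (matrixUnit n m l))
            + s • ((matrixUnit n m l) ⊗ₖ (matrixUnit n l m))
        else 0

/-- The entrywise Sklyanin bracket `C = (A⊗B)·R(t,s) − R(t,s)·(A⊗B)`. -/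
def sklyaninC {𝔽 : Type*} [Field 𝔽] (n : ℕ) (A B : Matrix (Fin n) (Fin n) 𝔽)
    (t s : 𝔽) : Matrix (Fin n × Fin n) (Fin n × Fin n) 𝔽 :=
  (A ⊗ₖ B) * trigR n t s - trigR n t s * (A ⊗ₖ B)


lemma matrixUnit_apply {𝔽 : Type*} [Field 𝔽] {n : ℕ} (i j a b : Fin n) :
    matrixUnit n i j a b = if i = a ∧ j = b then (1 : 𝔽) else 0 := by
  simp [matrixUnit, Matrix.single, Matrix.of_apply]

lemma trigR_col_diag {𝔽 : Type*} [Field 𝔽] {n : ℕ} (t s : 𝔽) (k l q : Fin n) :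
    trigR n t s (k, l) (q, q) = if k = q ∧ l = q then (t + s) / (s - t) else 0 := by
  simp only [trigR, Matrix.add_apply, Matrix.smul_apply, Matrix.sum_apply,
    apply_ite (fun M : Matrix (Fin n × Fin n) (Fin n × Fin n) 𝔽 => M (k,l) (q,q)),
    Matrix.zero_apply, Matrix.kroneckerMap_apply, matrixUnit_apply, smul_eq_mul,
    ite_mul, mul_ite, mul_one, mul_zero, one_mul, zero_mul, ite_and]
  have h2 : ∀ x y : Fin n, (if x < y then
        (if y = l then if x = q then if x = k then if y = q then t else 0 else 0 else 0 else 0) +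
          (if x = l then if y = q then if y = k then if x = q then s else 0 else 0 else 0 else 0)
      else 0) = 0 := by
    intro x y
    split_ifs <;> simp_all
  have h1 : ∀ x : Fin n,
      (if x = l then if x = q then if x = k then if x = q then (1:𝔽) else 0 else 0 else 0 else 0)
        = if x = q then (if k = q then if l = q then (1:𝔽) else 0 else 0) else 0 := by
    intro x
    split_ifs <;> simp_all
  simp only [h2, h1, Finset.sum_const_zero, mul_zero, add_zero, Finset.sum_ite_eq',
    Finset.mem_univ, if_true, mul_ite, mul_one, mul_zero, ite_and]

lemma trigR_row {𝔽 : Type*} [Field 𝔽] {n : ℕ} (t s : 𝔽) (p pb k l : Fin n) (hp : p < pb) :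
    trigR n t s (p, pb) (k, l) = if k = pb ∧ l = p then 2 * t / (s - t) else 0 := by
  have hne : p ≠ pb := ne_of_lt hp
  simp only [trigR, Matrix.add_apply, Matrix.smul_apply, Matrix.sum_apply,
    apply_ite (fun M : Matrix (Fin n × Fin n) (Fin n × Fin n) 𝔽 => M (p,pb) (k,l)),
    Matrix.zero_apply, Matrix.kroneckerMap_apply, matrixUnit_apply, smul_eq_mul,
    ite_mul, mul_ite, mul_one, mul_zero, one_mul, zero_mul, ite_and]
  have h1 : ∀ x : Fin n,
      (if x = pb then if x = l then if x = p then if x = k then (1:𝔽) else 0 else 0 else 0 else 0)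
        = (0:𝔽) := by
    intro x; split_ifs <;> simp_all
  have h2 : ∀ x x_1 : Fin n, (if x < x_1 then
        (if x_1 = pb then if x = l then if x = p then if x_1 = k then t else 0 else 0 else 0 else 0) +
          (if x = pb then if x_1 = l then if x_1 = p then if x = k then s else 0 else 0 else 0 else 0)
      else 0)
        = if x = p then (if x_1 = pb then (if k = pb then if l = p then t else 0 else 0) else 0) else 0 := by
    intro x y
    split_ifs <;> simp_all <;> omega
  simp only [h1, h2, Finset.sum_const_zero, mul_zero, zero_add]
  split_ifs <;> simp [Finset.sum_ite_eq'] <;> ring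

/-- Entry `((p,p̄),(q,q))`, `p < p̄`, of the Sklyanin bracket:
`{a_{pq}(t), a_{p̄q}(s)} = (2t a_{pq}(s) a_{p̄q}(t) − (t+s) a_{pq}(t) a_{p̄q}(s))/(t−s)`. -/
theorem sklyanin_entry_same_column {n : ℕ} (hn : 1 ≤ n) {𝔽 : Type*} [Field 𝔽]
    (t s : 𝔽) (hts : t ≠ s) (A B : Matrix (Fin n) (Fin n) 𝔽)
    (p pb q : Fin n) (hp : p < pb) :
    sklyaninC n A B t s (p, pb) (q, q)
      = (2 * t * B p q * A pb q - (t + s) * A p q * B pb q) / (t - s) := by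
  have hst : s - t ≠ 0 := sub_ne_zero.mpr (Ne.symm hts)
  have hts' : t - s ≠ 0 := sub_ne_zero.mpr hts
  rw [sklyaninC, Matrix.sub_apply, Matrix.mul_apply, Matrix.mul_apply]
  rw [Fintype.sum_prod_type, Fintype.sum_prod_type]
  simp only [Matrix.kroneckerMap_apply, trigR_col_diag, trigR_row t s p pb _ _ hp,
    ite_and, mul_ite, ite_mul, mul_zero, zero_mul, Finset.sum_ite_eq', Finset.mem_univ,
    if_true]
  simp only [Finset.sum_ite_irrel, Finset.sum_const_zero, Finset.sum_ite_eq', Finset.mem_univ, if_true]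
  field_simp
  ring
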